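/- Let d = 2, A = [[1,1,0],[0,1,1],[0,1,1]] and B = [[1,0,0],[0,1,1],[0,1,1]]. Then A > B entrywise (A ≥ B everywhere with strict inequality at the (1,2) entry), B is reducible, and nevertheless h(T_A) = h(T_B) = log 2; in particular, strict monotonicity of the entropy of hom Markov tree-shifts fails for reducible matrices. -/

import Mathlib

open Filter Real

/-- `treeP d M n i` = number of `n`-blocks of the hom Markov tree-shift `T_M`
on the `d`-tree whose root label is `i`. -/
def treeP (d : ℕ) {ι : Type} [Fintype ι] (M : Matrix ι ι ℕ) : ℕ → ι → ℕ
  | 0, _ => 1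
  | n + 1, i => (∑ j, M i j * treeP d M n j) ^ d

/-- `|Δ_n| = 1 + d + ⋯ + d^n`. -/
def deltaCard (d n : ℕ) : ℕ := ∑ i ∈ Finset.range (n + 1), d ^ i

/-- Topological entropy of the hom Markov tree-shift `T_M` on the `d`-tree. -/
noncomputable def treeEntropy (d : ℕ) {ι : Type} [Fintype ι] (M : Matrix ι ι ℕ) : ℝ :=
  Filter.limsup (fun n => Real.log (∑ i, treeP d M n i) / (deltaCard d n : ℝ)) Filter.atTop

/-- `M` has entries in `{0,1}`. -/
def IsBinary {ι : Type} [Fintype ι] (M : Matrix ι ι ℕ) : Prop := ∀ i j, M i j ≤ 1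

/-- `M` is irreducible. -/
def MatIrreducible {ι : Type} [Fintype ι] [DecidableEq ι] (M : Matrix ι ι ℕ) : Prop :=
  ∀ i j, ∃ n, 1 ≤ n ∧ 0 < (M ^ n) i j

/-- `M` is the block matrix `[[E_a, R],[O, E_b]]` with `R` binary of constant row sum `l`. -/
def IsMabl (a b l : ℕ) (M : Matrix (Fin (a + b)) (Fin (a + b)) ℕ) : Prop :=
  (∀ i j, M i j ≤ 1) ∧
  (∀ i j : Fin (a + b), (i : ℕ) < a → (j : ℕ) < a → M i j = 1) ∧
  (∀ i j : Fin (a + b), a ≤ (i : ℕ) → a ≤ (j : ℕ) → M i j = 1) ∧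
  (∀ i j : Fin (a + b), a ≤ (i : ℕ) → (j : ℕ) < a → M i j = 0) ∧
  (∀ i : Fin (a + b), (i : ℕ) < a → (∑ j : Fin (a + b), if a ≤ (j : ℕ) then M i j else 0) = l)


lemma deltaCard_two (n : ℕ) : deltaCard 2 n = 2 ^ (n + 1) - 1 := by
  unfold deltaCard
  induction n with
  | zero => rfl
  | succ k ih =>
      rw [Finset.sum_range_succ, ih]
      have h1 : 2 ^ (k + 2) = 2 ^ (k + 1) * 2 := pow_succ 2 (k + 1)
      have h2 : 1 ≤ 2 ^ (k + 1) := Nat.one_le_two_pow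
      omega

lemma two_le_pow (n : ℕ) : 2 ≤ 2 ^ (n + 1) := by
  calc 2 = 2 ^ 1 := rfl
  _ ≤ 2 ^ (n + 1) := Nat.pow_le_pow_right (by norm_num) (by omega)

/-- The key squeeze lemma. -/
lemma limsup_eq_log_two (s : ℕ → ℕ)
    (hl : ∀ n, 2 ^ (2 ^ (n + 1) - 2) ≤ s n)
    (hu : ∀ n, s n ≤ 2 ^ (2 ^ (n + 1) + 1)) :
    Filter.limsup (fun n => Real.log (s n) / (deltaCard 2 n : ℝ)) Filter.atTop
      = Real.log 2 := by
  have hc : ∀ n : ℕ, (deltaCard 2 n : ℝ) = 2 ^ (n + 1) - 1 := by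
    intro n
    rw [deltaCard_two]
    have := two_le_pow n
    push_cast [Nat.cast_sub (by omega : 1 ≤ 2 ^ (n + 1))]
    ring
  have hxpos : ∀ n : ℕ, (0:ℝ) < 2 ^ (n + 1) - 1 := by
    intro n
    have : (2:ℝ) ≤ 2 ^ (n + 1) := by
      have := two_le_pow n
      exact_mod_cast (by exact_mod_cast this : (2:ℝ) ≤ (2 ^ (n+1) : ℕ))
    linarith
  -- limit of lower and upper bounding sequences
  have hx : Tendsto (fun n : ℕ => (2:ℝ) ^ (n + 1) - 1) atTop atTop := by
    apply tendsto_atTop_add_const_right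
    exact (tendsto_pow_atTop_atTop_of_one_lt one_lt_two).comp (tendsto_add_atTop_nat 1)
  have h0 : Tendsto (fun n : ℕ => ((2:ℝ) ^ (n + 1) - 1)⁻¹) atTop (nhds 0) :=
    hx.inv_tendsto_atTop
  have hlo : Tendsto (fun n : ℕ => (((2:ℝ) ^ (n + 1) - 2) * Real.log 2) / ((2:ℝ) ^ (n + 1) - 1))
      atTop (nhds (Real.log 2)) := by
    have heq : ∀ n : ℕ, (((2:ℝ) ^ (n + 1) - 2) * Real.log 2) / ((2:ℝ) ^ (n + 1) - 1)
        = Real.log 2 - Real.log 2 * ((2:ℝ) ^ (n + 1) - 1)⁻¹ := by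
      intro n
      have h := hxpos n
      field_simp
      ring
    simp only [heq]
    have := (h0.const_mul (Real.log 2)).const_sub (Real.log 2)
    simpa using this
  have hhi : Tendsto (fun n : ℕ => (((2:ℝ) ^ (n + 1) + 1) * Real.log 2) / ((2:ℝ) ^ (n + 1) - 1))
      atTop (nhds (Real.log 2)) := by
    have heq : ∀ n : ℕ, (((2:ℝ) ^ (n + 1) + 1) * Real.log 2) / ((2:ℝ) ^ (n + 1) - 1)
        = Real.log 2 + (2 * Real.log 2) * ((2:ℝ) ^ (n + 1) - 1)⁻¹ := by
      intro n
      have h := hxpos n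
      field_simp
      ring
    simp only [heq]
    have := (h0.const_mul (2 * Real.log 2)).const_add (Real.log 2)
    simpa using this
  have htend : Tendsto (fun n => Real.log (s n) / (deltaCard 2 n : ℝ)) atTop
      (nhds (Real.log 2)) := by
    have hs1 : ∀ n, (0:ℝ) < (s n : ℝ) := by
      intro n
      have := hl n
      have h1 : 1 ≤ s n := le_trans Nat.one_le_two_pow this
      exact_mod_cast Nat.lt_of_lt_of_le Nat.zero_lt_one h1
    have hk : ∀ n, ((2 ^ (n + 1) - 2 : ℕ) : ℝ) = (2:ℝ) ^ (n + 1) - 2 := by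
      intro n
      push_cast [Nat.cast_sub (two_le_pow n)]
      ring
    apply tendsto_of_tendsto_of_tendsto_of_le_of_le hlo hhi
    · intro n
      simp only
      rw [hc n]
      rw [div_le_div_iff_of_pos_right (hxpos n)]
      calc ((2:ℝ) ^ (n + 1) - 2) * Real.log 2
          = Real.log ((2:ℝ) ^ (2 ^ (n + 1) - 2 : ℕ)) := by
            rw [Real.log_pow, hk n]
        _ ≤ Real.log (s n) := by
            apply Real.log_le_log (by positivity)
            exact_mod_cast hl n
    · intro n
      simp only
      rw [hc n]
      rw [div_le_div_iff_of_pos_right (hxpos n)]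
      calc Real.log (s n)
          ≤ Real.log ((2:ℝ) ^ (2 ^ (n + 1) + 1 : ℕ)) := by
            apply Real.log_le_log (hs1 n)
            exact_mod_cast hu n
        _ = ((2:ℝ) ^ (n + 1) + 1) * Real.log 2 := by
            rw [Real.log_pow]; push_cast; ring
  exact htend.limsup_eq

lemma pow_help (k : ℕ) : (2 ^ (2 ^ (k + 1) - 2) + 2 ^ (2 ^ (k + 1) - 2) : ℕ) ^ 2
    = 2 ^ (2 ^ (k + 1 + 1) - 2) := by
  have ha := two_le_pow k
  have hb : (2:ℕ) ^ (k + 2) = 2 * 2 ^ (k + 1) := by ring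
  simp only [show k + 1 + 1 = k + 2 from rfl]
  rw [← two_mul, ← pow_succ', ← pow_mul]
  congr 1
  omega

lemma treePB (n : ℕ) :
    treeP 2 (!![1, 0, 0; 0, 1, 1; 0, 1, 1] : Matrix (Fin 3) (Fin 3) ℕ) n 0 = 1 ∧
    treeP 2 (!![1, 0, 0; 0, 1, 1; 0, 1, 1] : Matrix (Fin 3) (Fin 3) ℕ) n 1 = 2 ^ (2 ^ (n + 1) - 2) ∧
    treeP 2 (!![1, 0, 0; 0, 1, 1; 0, 1, 1] : Matrix (Fin 3) (Fin 3) ℕ) n 2 = 2 ^ (2 ^ (n + 1) - 2) := by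
  induction n with
  | zero => exact ⟨rfl, rfl, rfl⟩
  | succ k ih =>
      obtain ⟨h0, h1, h2⟩ := ih
      have key : (2 ^ (k + 1) - 2) + 1 + ((2 ^ (k + 1) - 2) + 1) = 2 ^ (k + 2) - 2 := by
        have ha := two_le_pow k
        have hb : 2 ^ (k + 2) = 2 * 2 ^ (k + 1) := by ring
        omega
      refine ⟨?_, ?_, ?_⟩ <;>
      · show (∑ j, _) ^ 2 = _
        rw [Fin.sum_univ_three, h0, h1, h2]
        norm_num [Matrix.cons_val_two, Matrix.tail_cons, Matrix.vecHead, Matrix.vecTail]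
        try exact pow_help k

lemma treePA (n : ℕ) (i : Fin 3) :
    treeP 2 (!![1, 1, 0; 0, 1, 1; 0, 1, 1] : Matrix (Fin 3) (Fin 3) ℕ) n i
      = 2 ^ (2 ^ (n + 1) - 2) := by
  induction n generalizing i with
  | zero => rfl
  | succ k ih =>
      have key : (2 ^ (k + 1) - 2) + 1 + ((2 ^ (k + 1) - 2) + 1) = 2 ^ (k + 2) - 2 := by
        have ha := two_le_pow k
        have hb : 2 ^ (k + 2) = 2 * 2 ^ (k + 1) := by ring
        omega
      fin_cases i <;>
      · show (∑ j, _) ^ 2 = _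
        rw [Fin.sum_univ_three, ih 0, ih 1, ih 2]
        norm_num [Matrix.cons_val_two, Matrix.tail_cons, Matrix.vecHead, Matrix.vecTail]
        exact pow_help k


lemma notIrredB :
    ¬ MatIrreducible (!![1, 0, 0; 0, 1, 1; 0, 1, 1] : Matrix (Fin 3) (Fin 3) ℕ) := by
  intro h
  obtain ⟨n, hn1, hn2⟩ := h 0 1
  have key : ∀ m : ℕ, ((!![1, 0, 0; 0, 1, 1; 0, 1, 1] : Matrix (Fin 3) (Fin 3) ℕ) ^ (m + 1)) 0 1 = 0 := by
    intro m
    induction m with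
    | zero => simp [pow_one]
    | succ p ih =>
        rw [pow_succ', Matrix.mul_apply, Fin.sum_univ_three, ih]
        norm_num
        exact Or.inl rfl
  obtain ⟨m, rfl⟩ : ∃ m, n = m + 1 := ⟨n - 1, by omega⟩
  rw [key m] at hn2
  exact lt_irrefl 0 hn2


/-- **Remark 2.3.** For `d = 2`, `A = [[1,1,0],[0,1,1],[0,1,1]]` and
`B = [[1,0,0],[0,1,1],[0,1,1]]`: `A > B` entrywise, `B` is reducible, yet
`h(T_A) = h(T_B) = log 2`; strict monotonicity fails for reducible matrices. -/
theorem treeEntropy_reducible_monotonicity_fails :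
    (∀ i j, (!![1, 0, 0; 0, 1, 1; 0, 1, 1] : Matrix (Fin 3) (Fin 3) ℕ) i j ≤
      (!![1, 1, 0; 0, 1, 1; 0, 1, 1] : Matrix (Fin 3) (Fin 3) ℕ) i j) ∧
    (!![1, 0, 0; 0, 1, 1; 0, 1, 1] : Matrix (Fin 3) (Fin 3) ℕ) 0 1 <
      (!![1, 1, 0; 0, 1, 1; 0, 1, 1] : Matrix (Fin 3) (Fin 3) ℕ) 0 1 ∧
    ¬ MatIrreducible (!![1, 0, 0; 0, 1, 1; 0, 1, 1] : Matrix (Fin 3) (Fin 3) ℕ) ∧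
    treeEntropy 2 (!![1, 1, 0; 0, 1, 1; 0, 1, 1] : Matrix (Fin 3) (Fin 3) ℕ) = Real.log 2 ∧
    treeEntropy 2 (!![1, 0, 0; 0, 1, 1; 0, 1, 1] : Matrix (Fin 3) (Fin 3) ℕ) = Real.log 2 := by
  refine ⟨by intro i j; fin_cases i <;> fin_cases j <;> decide, by decide, notIrredB, ?_, ?_⟩
  · unfold treeEntropy
    have hs : ∀ n, (∑ i, treeP 2 (!![1, 1, 0; 0, 1, 1; 0, 1, 1] : Matrix (Fin 3) (Fin 3) ℕ) n i)
        = 3 * 2 ^ (2 ^ (n + 1) - 2) := by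
      intro n
      rw [Fin.sum_univ_three, treePA, treePA, treePA]
      ring
    simp only [← Nat.cast_sum]
    simp only [hs]
    apply limsup_eq_log_two
    · intro n
      exact Nat.le_mul_of_pos_left _ (by norm_num)
    · intro n
      have ha := two_le_pow n
      have hq : 1 ≤ 2 ^ (2 ^ (n + 1) - 2) := Nat.one_le_two_pow
      have he : 2 ^ (n + 1) + 1 = (2 ^ (n + 1) - 2) + 3 := by omega
      have hval : (2:ℕ) ^ (2 ^ (n + 1) + 1) = 2 ^ (2 ^ (n + 1) - 2) * 8 := by
        rw [he, pow_add 2 (2 ^ (n + 1) - 2) 3]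
        norm_num
      omega
  · unfold treeEntropy
    have hs : ∀ n, (∑ i, treeP 2 (!![1, 0, 0; 0, 1, 1; 0, 1, 1] : Matrix (Fin 3) (Fin 3) ℕ) n i)
        = 1 + 2 * 2 ^ (2 ^ (n + 1) - 2) := by
      intro n
      obtain ⟨h0, h1, h2⟩ := treePB n
      rw [Fin.sum_univ_three, h0, h1, h2]
      ring
    simp only [← Nat.cast_sum]
    simp only [hs]
    apply limsup_eq_log_two
    · intro n
      omega
    · intro n
      have ha := two_le_pow n
      have hq : 1 ≤ 2 ^ (2 ^ (n + 1) - 2) := Nat.one_le_two_pow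
      have he : 2 ^ (n + 1) + 1 = (2 ^ (n + 1) - 2) + 3 := by omega
      have hval : (2:ℕ) ^ (2 ^ (n + 1) + 1) = 2 ^ (2 ^ (n + 1) - 2) * 8 := by
        rw [he, pow_add 2 (2 ^ (n + 1) - 2) 3]
        norm_num
      omega
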